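/- arXiv:2307.03983 — 2 statements merged into one kernel-verified Lean document; each statement's English description precedes it below -/
import Mathlib

section
/- As P → ∞, the ratio P̂out(P) / ( ε0·(1+εs)/P + εs^M/P^M ) converges to 1; in particular, the FSIC-PA outage probability with equal powers P0 = Ps = P tends to 0 as P → ∞ (no outage error floor). -/
open MeasureTheory ProbabilityTheory Real Filter

/-- The interference threshold `τ(g) = max{0, g/α₀ − 1}`. -/
noncomputable def tau (α0 g : ℝ) : ℝ := max 0 (g / α0 - 1)

/-- The FSIC-PA achievable rate of a secondary user with channel gain `h`,
given the primary channel gain `g`. -/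
noncomputable def rateFSIC (Ps α0 h g : ℝ) : ℝ :=
  if Ps * h ≤ tau α0 g then Real.logb 2 (1 + Ps * h)
  else Real.logb 2 (1 + tau α0 g)

/-- The FSIC-PA overall outage probability with equal powers `P0 = Ps = P`, realized on
the canonical probability space carrying `M + 1` i.i.d. rate-one exponential random
variables: coordinate `0` is the primary channel gain `G = |g|²` and coordinates
`1, …, M` are the secondary channel gains `H₁, …, H_M`. -/
noncomputable def outageFSIC (M : ℕ) (R0 Rs P : ℝ) : ℝ :=
  haveI : IsProbabilityMeasure (expMeasure 1) := isProbabilityMeasure_expMeasure one_pos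
  ((Measure.pi fun _ : Fin (M + 1) => expMeasure 1)
    {ω | (⨆ m : Fin M, rateFSIC P ((2 ^ R0 - 1) / P) (ω m.succ) (ω 0)) < Rs}).toReal

open Set

lemma expMeasure_apply {s : Set ℝ} (hs : MeasurableSet s) :
    expMeasure 1 s = ∫⁻ x in s, exponentialPDF 1 x := by
  rw [expMeasure, gammaMeasure, withDensity_apply _ hs]; rfl

lemma expMeasure_Iic (x : ℝ) :
    expMeasure 1 (Iic x) = ENNReal.ofReal (if 0 ≤ x then 1 - rexp (-x) else 0) := by
  rw [expMeasure_apply measurableSet_Iic, lintegral_exponentialPDF_eq_antiDeriv one_pos x]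
  simp

lemma expMeasure_singleton (x : ℝ) : expMeasure 1 {x} = 0 := by
  rw [expMeasure_apply (measurableSet_singleton x)]
  rw [setLIntegral_measure_zero _ _ (Real.volume_singleton)]

lemma expMeasure_Iio (x : ℝ) :
    expMeasure 1 (Iio x) = ENNReal.ofReal (if 0 ≤ x then 1 - rexp (-x) else 0) := by
  have : Iic x = Iio x ∪ {x} := (Iio_union_right).symm
  have h := expMeasure_Iic x
  rw [this, measure_union (by simp) (measurableSet_singleton x), expMeasure_singleton,
    add_zero] at h
  exact h

lemma expMeasure_Ici {x : ℝ} (hx : 0 ≤ x) :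
    expMeasure 1 (Ici x) = ENNReal.ofReal (rexp (-x)) := by
  haveI : IsProbabilityMeasure (expMeasure 1) := isProbabilityMeasure_expMeasure one_pos
  have : Ici x = (Iio x)ᶜ := (compl_Iio).symm
  rw [this, measure_compl measurableSet_Iio (measure_ne_top _ _), expMeasure_Iio,
    if_pos hx, measure_univ, ← ENNReal.ofReal_one,
    ← ENNReal.ofReal_sub _ (by simp [Real.exp_le_one_iff, neg_nonpos.mpr hx])]
  ring_nf

lemma rateFSIC_eq (Ps α0 h g : ℝ) :
    rateFSIC Ps α0 h g = Real.logb 2 (1 + min (Ps * h) (tau α0 g)) := by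
  unfold rateFSIC
  split_ifs with h1
  · rw [min_eq_left h1]
  · rw [min_eq_right (le_of_not_ge h1)]

lemma fin_ciSup_lt_iff {M : ℕ} (hM : 1 ≤ M) (f : Fin M → ℝ) (a : ℝ) :
    (⨆ m, f m) < a ↔ ∀ m, f m < a := by
  haveI : Nonempty (Fin M) := ⟨⟨0, hM⟩⟩
  obtain ⟨x, hx⟩ := Finite.exists_max f
  constructor
  · intro h m
    exact lt_of_le_of_lt (le_ciSup (Set.Finite.bddAbove (Set.finite_range f)) m) h
  · intro h
    exact lt_of_le_of_lt (ciSup_le hx) (h x)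

lemma outage_closed_form (M : ℕ) (hM : 1 ≤ M) (R0 Rs : ℝ) (hR0 : 0 < R0) (hRs : 0 < Rs)
    {P : ℝ} (hP : 0 < P) :
    outageFSIC M R0 Rs P
      = (1 - rexp (-((2 ^ R0 - 1) * 2 ^ Rs / P)))
        + rexp (-((2 ^ R0 - 1) * 2 ^ Rs / P)) * (1 - rexp (-((2 ^ Rs - 1) / P))) ^ M := by
  haveI : IsProbabilityMeasure (expMeasure 1) := isProbabilityMeasure_expMeasure one_pos
  have hε0 : (0:ℝ) < 2 ^ R0 - 1 := by
    have := (Real.one_lt_rpow_iff_of_pos two_pos).2 (Or.inl ⟨one_lt_two, hR0⟩)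
    linarith
  have hεs : (0:ℝ) < 2 ^ Rs - 1 := by
    have := (Real.one_lt_rpow_iff_of_pos two_pos).2 (Or.inl ⟨one_lt_two, hRs⟩)
    linarith
  have h2Rs : (0:ℝ) < 2 ^ Rs := Real.rpow_pos_of_pos two_pos Rs
  set ε0 : ℝ := 2 ^ R0 - 1 with hε0def
  set u : ℝ := ε0 * 2 ^ Rs / P with hudef
  set v : ℝ := (2 ^ Rs - 1) / P with hvdef
  have hu : 0 < u := by positivity
  have hv : 0 < v := by positivity
  have hα0 : 0 < ε0 / P := by positivity
  set μ : Measure (Fin (M+1) → ℝ) := Measure.pi fun _ => expMeasure 1 with hμdef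
  set tA : Fin (M+1) → Set ℝ := Fin.cons (Iio u) fun _ => univ with htA
  set tC : Fin (M+1) → Set ℝ := Fin.cons (Ici u) fun _ => Iio v with htC
  -- the bad (negative-coordinate) set is null
  have hnull : μ {ω : Fin (M+1) → ℝ | ¬ ∀ i, 0 ≤ ω i} = 0 := by
    have hsub : {ω : Fin (M+1) → ℝ | ¬ ∀ i, 0 ≤ ω i}
        ⊆ ⋃ i, {ω : Fin (M+1) → ℝ | ω i < 0} := by
      intro ω hω
      push_neg at hω
      obtain ⟨i, hi⟩ := hω
      exact Set.mem_iUnion.2 ⟨i, hi⟩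
    refine measure_mono_null hsub (measure_iUnion_null fun i => ?_)
    have : {ω : Fin (M+1) → ℝ | ω i < 0}
        = Set.pi Set.univ (Function.update (fun _ : Fin (M+1) => (univ : Set ℝ)) i (Iio 0)) := by
      ext ω
      simp only [Set.mem_setOf_eq, Set.mem_pi, Set.mem_univ, true_implies]
      constructor
      · intro h j
        rcases eq_or_ne j i with rfl | hj
        · simpa using h
        · simp [Function.update_of_ne hj]
      · intro h
        have := h i
        simpa using this
    rw [this, Measure.pi_pi]
    refine Finset.prod_eq_zero (Finset.mem_univ i) ?_
    simp [expMeasure_Iio]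
  -- a.e. identification of the outage event
  have hae : {ω : Fin (M+1) → ℝ |
        (⨆ m : Fin M, rateFSIC P ((2 ^ R0 - 1) / P) (ω m.succ) (ω 0)) < Rs}
      =ᵐ[μ] ((Set.univ.pi tA ∪ Set.univ.pi tC : Set (Fin (M+1) → ℝ))) := by
    rw [Filter.eventuallyEq_set]
    have hevent : ∀ᵐ ω ∂μ, ∀ i, 0 ≤ ω i := by
      rw [MeasureTheory.ae_iff]
      exact hnull
    filter_upwards [hevent] with ω h0
    simp only [Set.mem_setOf_eq, Set.mem_union, Set.mem_pi, Set.mem_univ, true_implies]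
    rw [fin_ciSup_lt_iff hM]
    have key : ∀ m : Fin M,
        rateFSIC P ((2 ^ R0 - 1) / P) (ω m.succ) (ω 0) < Rs ↔
          (ω m.succ < v ∨ ω 0 < u) := by
      intro m
      rw [rateFSIC_eq]
      have hτ : 0 ≤ tau (ε0 / P) (ω 0) := le_max_left _ _
      have hmin : 0 ≤ min (P * ω m.succ) (tau (ε0 / P) (ω 0)) :=
        le_min (mul_nonneg hP.le (h0 m.succ)) hτ
      rw [Real.logb_lt_iff_lt_rpow one_lt_two (by linarith)]
      have : (1 + min (P * ω m.succ) (tau (ε0 / P) (ω 0)) < 2 ^ Rs)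
          ↔ min (P * ω m.succ) (tau (ε0 / P) (ω 0)) < 2 ^ Rs - 1 := by constructor <;> intro <;> linarith
      rw [this, min_lt_iff]
      have h1 : P * ω m.succ < 2 ^ Rs - 1 ↔ ω m.succ < v := by
        rw [hvdef, lt_div_iff₀ hP]; constructor <;> intro <;> linarith [mul_comm P (ω m.succ)]
      have h2 : tau (ε0 / P) (ω 0) < 2 ^ Rs - 1 ↔ ω 0 < u := by
        have heq : 2 ^ Rs * (ε0 / P) = u := by rw [hudef]; ring
        unfold tau
        rw [max_lt_iff, sub_lt_sub_iff_right, div_lt_iff₀ hα0, heq]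
        exact and_iff_right hεs
      rw [h1, h2]
    constructor
    · intro h
      rcases (forall_or_right.1 fun m => (key m).1 (h m)) with h' | h'
      · rcases lt_or_ge (ω 0) u with h'' | h''
        · exact Or.inl (by
            intro i
            refine Fin.cases ?_ ?_ i
            · simpa [htA] using h''
            · intro m; simp [htA])
        · exact Or.inr (by
            intro i
            refine Fin.cases ?_ ?_ i
            · simpa [htC] using h''
            · intro m; simpa [htC] using h' m)
      · exact Or.inl (by
          intro i
          refine Fin.cases ?_ ?_ i
          · simpa [htA] using h'
          · intro m; simp [htA])
    · intro h m
      rcases h with h | h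
      · have := h 0
        simp only [htA, Fin.cons_zero] at this
        exact (key m).2 (Or.inr this)
      · have := h m.succ
        simp only [htC, Fin.cons_succ] at this
        exact (key m).2 (Or.inl this)
  -- measurability and disjointness
  have hmeasC : MeasurableSet (Set.univ.pi tC) := by
    refine MeasurableSet.univ_pi fun i => ?_
    refine Fin.cases ?_ ?_ i
    · simpa [htC] using measurableSet_Ici
    · intro m; simpa [htC] using measurableSet_Iio
  have hdisj : Disjoint (Set.univ.pi tA) (Set.univ.pi tC) := by
    rw [Set.disjoint_left]
    intro ω hA hC
    have h1 := hA 0 (Set.mem_univ 0)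
    have h2 := hC 0 (Set.mem_univ 0)
    simp only [htA, htC, Fin.cons_zero, Set.mem_Iio, Set.mem_Ici] at h1 h2
    exact absurd h1 (not_lt.2 h2)
  have hout : outageFSIC M R0 Rs P
      = (μ {ω : Fin (M+1) → ℝ |
          (⨆ m : Fin M, rateFSIC P ((2 ^ R0 - 1) / P) (ω m.succ) (ω 0)) < Rs}).toReal := rfl
  have hA : (∏ i, expMeasure 1 (tA i)) = ENNReal.ofReal (1 - rexp (-u)) := by
    rw [Fin.prod_univ_succ]
    simp [htA, expMeasure_Iio, hu.le]
  have hCval : (∏ i, expMeasure 1 (tC i))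
      = ENNReal.ofReal (rexp (-u)) * ENNReal.ofReal (1 - rexp (-v)) ^ M := by
    rw [Fin.prod_univ_succ]
    simp [htC, expMeasure_Iio, hv.le, expMeasure_Ici hu.le, Finset.prod_const]
  have h1u : 0 ≤ 1 - rexp (-u) := by
    have : rexp (-u) ≤ 1 := Real.exp_le_one_iff.2 (by linarith)
    linarith
  have h1v : 0 ≤ 1 - rexp (-v) := by
    have : rexp (-v) ≤ 1 := Real.exp_le_one_iff.2 (by linarith)
    linarith
  rw [hout, measure_congr hae, measure_union hdisj hmeasC, Measure.pi_pi, Measure.pi_pi,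
    hA, hCval, ENNReal.toReal_add (by simp) (ENNReal.mul_ne_top ENNReal.ofReal_ne_top (ENNReal.pow_ne_top ENNReal.ofReal_ne_top)), ENNReal.toReal_mul,
    ENNReal.toReal_pow, ENNReal.toReal_ofReal h1u, ENNReal.toReal_ofReal (Real.exp_nonneg _),
    ENNReal.toReal_ofReal h1v]

lemma ratio_decomp {F r1 r2 x y d : ℝ} (hd : d ≠ 0) (hF : F = r1 * x + r2 * y)
    (hdxy : d = x + y) :
    F / d - 1 = (r1 - 1) * (x / d) + (r2 - 1) * (y / d) := by
  subst hF hdxy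
  field_simp
  ring

lemma slope_exp_tendsto : Tendsto (fun y : ℝ => (rexp y - 1) / y) (nhdsWithin 0 {0}ᶜ) (nhds 1) := by
  have h := hasDerivAt_iff_tendsto_slope.1 (Real.hasDerivAt_exp 0)
  rw [Real.exp_zero] at h
  refine h.congr fun y => ?_
  rw [slope_def_field, Real.exp_zero, sub_zero]

lemma one_sub_exp_div_tendsto {w : ℝ → ℝ} (hw : Tendsto w atTop (nhds 0))
    (hwpos : ∀ᶠ P in atTop, 0 < w P) :
    Tendsto (fun P => (1 - rexp (-(w P))) / (w P)) atTop (nhds 1) := by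
  have h1 : Tendsto (fun P => -(w P)) atTop (nhdsWithin 0 {0}ᶜ) := by
    rw [tendsto_nhdsWithin_iff]
    constructor
    · simpa using hw.neg
    · filter_upwards [hwpos] with P hP
      simp only [Set.mem_compl_iff, Set.mem_singleton_iff]
      exact neg_ne_zero.2 hP.ne'
  have h2 := slope_exp_tendsto.comp h1
  refine h2.congr' ?_
  filter_upwards [hwpos] with P hP
  show (rexp (-(w P)) - 1) / (-(w P)) = (1 - rexp (-(w P))) / (w P)
  rw [div_neg, ← neg_div, neg_sub]

/-- Corollary 3: with equal powers `P0 = Ps = P`, as `P → ∞`,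
`P̂out(P) / (ε0(1+εs)/P + εs^M/P^M) → 1`; in particular `P̂out(P) → 0`
(no outage error floor). -/
theorem fsic_pa_outage_high_snr
    (M : ℕ) (hM : 1 ≤ M) (R0 Rs : ℝ) (hR0 : 0 < R0) (hRs : 0 < Rs)
    (ε0 εs : ℝ) (hε0 : ε0 = 2 ^ R0 - 1) (hεs : εs = 2 ^ Rs - 1) :
    Tendsto (fun P : ℝ =>
        outageFSIC M R0 Rs P / (ε0 * (1 + εs) / P + εs ^ M / P ^ M))
      atTop (nhds 1) ∧
    Tendsto (fun P : ℝ => outageFSIC M R0 Rs P) atTop (nhds 0) := by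
  have hε0pos : (0:ℝ) < ε0 := by
    rw [hε0]
    have := (Real.one_lt_rpow_iff_of_pos two_pos).2 (Or.inl ⟨one_lt_two, hR0⟩)
    linarith
  have hεspos : (0:ℝ) < εs := by
    rw [hεs]
    have := (Real.one_lt_rpow_iff_of_pos two_pos).2 (Or.inl ⟨one_lt_two, hRs⟩)
    linarith
  set c : ℝ := ε0 * (1 + εs) with hcdef
  have hc : 0 < c := by positivity
  have hcval : c = (2 ^ R0 - 1) * 2 ^ Rs := by rw [hcdef, hε0, hεs]; ring
  -- closed form, eventually
  have hFeq : ∀ᶠ P in atTop, outageFSIC M R0 Rs P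
      = (1 - rexp (-(c / P))) + rexp (-(c / P)) * (1 - rexp (-(εs / P))) ^ M := by
    filter_upwards [eventually_gt_atTop (0:ℝ)] with P hP
    rw [outage_closed_form M hM R0 Rs hR0 hRs hP, hcval, hεs]
  -- basic limits
  have hU : Tendsto (fun P : ℝ => c / P) atTop (nhds 0) :=
    tendsto_const_nhds.div_atTop tendsto_id
  have hV : Tendsto (fun P : ℝ => εs / P) atTop (nhds 0) :=
    tendsto_const_nhds.div_atTop tendsto_id
  have hUn : Tendsto (fun P : ℝ => -(c / P)) atTop (nhds 0) := by simpa using hU.neg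
  have hVn : Tendsto (fun P : ℝ => -(εs / P)) atTop (nhds 0) := by simpa using hV.neg
  have hExpU : Tendsto (fun P : ℝ => rexp (-(c / P))) atTop (nhds 1) := by
    have := (Real.continuous_exp.tendsto 0).comp hUn
    simpa [Function.comp_def] using this
  have hExpV : Tendsto (fun P : ℝ => rexp (-(εs / P))) atTop (nhds 1) := by
    have := (Real.continuous_exp.tendsto 0).comp hVn
    simpa [Function.comp_def] using this
  -- Part 2: outage → 0
  have hzero : Tendsto (fun P : ℝ => outageFSIC M R0 Rs P) atTop (nhds 0) := by
    refine Tendsto.congr' (hFeq.mono fun P h => h.symm) ?_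
    have h1 : Tendsto (fun P : ℝ => 1 - rexp (-(c / P))) atTop (nhds 0) := by
      simpa using (tendsto_const_nhds (x := (1:ℝ))).sub hExpU
    have h2 : Tendsto (fun P : ℝ => (1 - rexp (-(εs / P))) ^ M) atTop (nhds 0) := by
      have h3 : Tendsto (fun P : ℝ => 1 - rexp (-(εs / P))) atTop (nhds 0) := by
        simpa using (tendsto_const_nhds (x := (1:ℝ))).sub hExpV
      simpa [zero_pow (by omega : M ≠ 0)] using h3.pow M
    simpa using h1.add (hExpU.mul h2)
  refine ⟨?_, hzero⟩
  -- Part 1: ratio → 1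
  set r1 : ℝ → ℝ := fun P => (1 - rexp (-(c / P))) / (c / P) with hr1def
  set r2 : ℝ → ℝ := fun P =>
    rexp (-(c / P)) * ((1 - rexp (-(εs / P))) / (εs / P)) ^ M with hr2def
  have hr1 : Tendsto r1 atTop (nhds 1) :=
    one_sub_exp_div_tendsto hU ((eventually_gt_atTop 0).mono fun P hP => by positivity)
  have hr2 : Tendsto r2 atTop (nhds 1) := by
    have hv1 : Tendsto (fun P : ℝ => (1 - rexp (-(εs / P))) / (εs / P)) atTop (nhds 1) :=
      one_sub_exp_div_tendsto hV ((eventually_gt_atTop 0).mono fun P hP => by positivity)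
    have := hExpU.mul (hv1.pow M)
    simpa using this
  set d : ℝ → ℝ := fun P => ε0 * (1 + εs) / P + εs ^ M / P ^ M with hddef
  have key : ∀ᶠ P in atTop,
      |outageFSIC M R0 Rs P / d P - 1| ≤ |r1 P - 1| + |r2 P - 1| := by
    filter_upwards [eventually_gt_atTop (0:ℝ), hFeq] with P hP hF
    have hx : (0:ℝ) < c / P := by positivity
    have hy : (0:ℝ) < εs ^ M / P ^ M := by positivity
    have hvp : (0:ℝ) < εs / P := by positivity
    have hdP : d P = c / P + εs ^ M / P ^ M := by rw [hddef]
    have hd : 0 < d P := by rw [hdP]; positivity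
    have hfx : 1 - rexp (-(c / P)) = r1 P * (c / P) :=
      (div_mul_cancel₀ _ hx.ne').symm
    have hfy : rexp (-(c / P)) * (1 - rexp (-(εs / P))) ^ M = r2 P * (εs ^ M / P ^ M) := by
      have hyy : εs ^ M / P ^ M = (εs / P) ^ M := (div_pow _ _ _).symm
      rw [hyy, hr2def, mul_assoc, div_pow, div_mul_cancel₀ _ (pow_ne_zero M hvp.ne')]
    have heq : outageFSIC M R0 Rs P / d P - 1
        = (r1 P - 1) * ((c / P) / d P) + (r2 P - 1) * ((εs ^ M / P ^ M) / d P) :=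
      ratio_decomp hd.ne' (by rw [hF, hfx, hfy]) hdP
    have hs1 : 0 ≤ (c / P) / d P := by positivity
    have hs2 : (c / P) / d P ≤ 1 := by
      rw [div_le_one hd, hdP]; linarith
    have ht1 : 0 ≤ (εs ^ M / P ^ M) / d P := by positivity
    have ht2 : (εs ^ M / P ^ M) / d P ≤ 1 := by
      rw [div_le_one hd, hdP]; linarith
    calc |outageFSIC M R0 Rs P / d P - 1|
        = |(r1 P - 1) * ((c / P) / d P) + (r2 P - 1) * ((εs ^ M / P ^ M) / d P)| := by rw [heq]
      _ ≤ |(r1 P - 1) * ((c / P) / d P)| + |(r2 P - 1) * ((εs ^ M / P ^ M) / d P)| :=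
          abs_add_le _ _
      _ = |r1 P - 1| * ((c / P) / d P) + |r2 P - 1| * ((εs ^ M / P ^ M) / d P) := by
          rw [abs_mul, abs_mul, abs_of_nonneg hs1, abs_of_nonneg ht1]
      _ ≤ |r1 P - 1| * 1 + |r2 P - 1| * 1 := by
          have ha1 := abs_nonneg (r1 P - 1)
          have ha2 := abs_nonneg (r2 P - 1)
          nlinarith [hs2, ht2]
      _ = |r1 P - 1| + |r2 P - 1| := by ring
  have hbound : Tendsto (fun P => |r1 P - 1| + |r2 P - 1|) atTop (nhds 0) := by
    have h1 : Tendsto (fun P => |r1 P - 1|) atTop (nhds 0) := by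
      simpa using (hr1.sub (tendsto_const_nhds (x := (1:ℝ)))).abs
    have h2 : Tendsto (fun P => |r2 P - 1|) atTop (nhds 0) := by
      simpa using (hr2.sub (tendsto_const_nhds (x := (1:ℝ)))).abs
    simpa using h1.add h2
  have hmain : Tendsto (fun P => outageFSIC M R0 Rs P / d P - 1) atTop (nhds 0) :=
    squeeze_zero_norm' (key.mono fun P hP => by simpa [Real.norm_eq_abs] using hP) hbound
  have := hmain.add (tendsto_const_nhds (x := (1:ℝ)))
  simpa using this
end

section
/- The diversity gain achieved by the FSIC-PA scheme equals 1: P̂out(P) > 0 for every P > 0, and lim_{P→∞} log P̂out(P) / log P = −1. -/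
open MeasureTheory ProbabilityTheory Real Filter

/-! ### Auxiliary lemmas about the exponential measure -/

lemma expM_Iic (t : ℝ) : expMeasure 1 (Set.Iic t) =
    ENNReal.ofReal (if 0 ≤ t then 1 - Real.exp (-t) else 0) := by
  haveI : IsProbabilityMeasure (expMeasure 1) := isProbabilityMeasure_expMeasure one_pos
  have h := cdf_expMeasure_eq one_pos t
  simp only [one_mul] at h
  rw [← h, ofReal_cdf]

lemma expM_singleton (t : ℝ) : expMeasure 1 {t} = 0 := by
  rw [expMeasure, gammaMeasure]
  exact (withDensity_absolutelyContinuous _ _) (measure_singleton t)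

lemma expM_Iio (t : ℝ) : expMeasure 1 (Set.Iio t) =
    ENNReal.ofReal (if 0 ≤ t then 1 - Real.exp (-t) else 0) := by
  have h2 : expMeasure 1 (Set.Iio t) = expMeasure 1 (Set.Iic t) := by
    apply le_antisymm (measure_mono Set.Iio_subset_Iic_self)
    rw [← Set.Iio_union_right]
    exact (measure_union_le _ _).trans (by rw [expM_singleton, add_zero])
  rw [h2, expM_Iic]

lemma one_sub_exp_neg_nonneg {x : ℝ} (hx : 0 ≤ x) : 0 ≤ 1 - Real.exp (-x) := by
  have h : Real.exp (-x) ≤ Real.exp 0 := Real.exp_le_exp.mpr (by linarith)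
  rw [Real.exp_zero] at h; linarith

lemma one_sub_exp_neg_le (x : ℝ) : 1 - Real.exp (-x) ≤ x := by
  have h := Real.add_one_le_exp (-x); linarith

lemma exp_neg_le_one {x : ℝ} (hx : 0 ≤ x) : Real.exp (-x) ≤ 1 := by
  have h : Real.exp (-x) ≤ Real.exp 0 := Real.exp_le_exp.mpr (by linarith)
  rwa [Real.exp_zero] at h

lemma exp_neg_lt_one {x : ℝ} (hx : 0 < x) : Real.exp (-x) < 1 := by
  have h : Real.exp (-x) < Real.exp 0 := Real.exp_lt_exp.mpr (by linarith)
  rwa [Real.exp_zero] at h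

lemma mul_exp_neg_le_one_sub (x : ℝ) : x * Real.exp (-x) ≤ 1 - Real.exp (-x) := by
  have key : (x + 1) * Real.exp (-x) ≤ Real.exp x * Real.exp (-x) :=
    mul_le_mul_of_nonneg_right (Real.add_one_le_exp x) (Real.exp_pos (-x)).le
  have hx0 : x + -x = 0 := by ring
  rw [← Real.exp_add, hx0, Real.exp_zero] at key
  nlinarith [Real.exp_pos (-x)]

lemma expM_Ici {t : ℝ} (ht : 0 ≤ t) :
    expMeasure 1 (Set.Ici t) = ENNReal.ofReal (Real.exp (-t)) := by
  haveI : IsProbabilityMeasure (expMeasure 1) := isProbabilityMeasure_expMeasure one_pos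
  rw [← Set.compl_Iio, measure_compl measurableSet_Iio (measure_ne_top _ _), measure_univ,
    expM_Iio, if_pos ht, ← ENNReal.ofReal_one,
    ← ENNReal.ofReal_sub _ (one_sub_exp_neg_nonneg ht), sub_sub_cancel]

/-! ### Auxiliary lemmas about the product measure -/

lemma pi_cases_eq (M : ℕ) (A B : Set ℝ) :
    {ω : Fin (M + 1) → ℝ | ω 0 ∈ A ∧ ∀ m : Fin M, ω m.succ ∈ B} =
      Set.univ.pi (Fin.cases A fun _ => B) := by
  ext ω
  simp only [Set.mem_setOf_eq, Set.mem_pi, Set.mem_univ, forall_true_left]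
  constructor
  · rintro ⟨h0, hm⟩ i
    induction i using Fin.cases with
    | zero => simpa using h0
    | succ m => simpa using hm m
  · intro h
    exact ⟨by simpa using h 0, fun m => by simpa using h m.succ⟩

lemma pi_cases_measure (M : ℕ) (A B : Set ℝ) :
    (Measure.pi fun _ : Fin (M + 1) => expMeasure 1)
        {ω : Fin (M + 1) → ℝ | ω 0 ∈ A ∧ ∀ m : Fin M, ω m.succ ∈ B} =
      expMeasure 1 A * expMeasure 1 B ^ M := by
  haveI : IsProbabilityMeasure (expMeasure 1) := isProbabilityMeasure_expMeasure one_pos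
  rw [pi_cases_eq, Measure.pi_pi, Fin.prod_univ_succ]
  simp [Finset.prod_const, Finset.card_univ]

lemma pi_coord_neg_null (M : ℕ) (j : Fin (M + 1)) :
    (Measure.pi fun _ : Fin (M + 1) => expMeasure 1) {ω : Fin (M + 1) → ℝ | ω j < 0} = 0 := by
  classical
  haveI : IsProbabilityMeasure (expMeasure 1) := isProbabilityMeasure_expMeasure one_pos
  have h : {ω : Fin (M + 1) → ℝ | ω j < 0} = Function.eval j ⁻¹' Set.Iio (0 : ℝ) := rfl
  rw [h, Set.eval_preimage, Measure.pi_pi]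
  apply Finset.prod_eq_zero (Finset.mem_univ j)
  rw [Function.update_self, expM_Iio]
  simp

lemma pi_neg_null (M : ℕ) :
    (Measure.pi fun _ : Fin (M + 1) => expMeasure 1)
      {ω : Fin (M + 1) → ℝ | ∀ m : Fin M, 0 ≤ ω m.succ}ᶜ = 0 := by
  have hsub : {ω : Fin (M + 1) → ℝ | ∀ m : Fin M, 0 ≤ ω m.succ}ᶜ ⊆
      ⋃ m : Fin M, {ω : Fin (M + 1) → ℝ | ω m.succ < 0} := by
    intro ω hω
    simp only [Set.mem_compl_iff, Set.mem_setOf_eq, not_forall, not_le] at hω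
    obtain ⟨m, hm⟩ := hω
    exact Set.mem_iUnion.mpr ⟨m, hm⟩
  refine le_antisymm (le_trans (measure_mono hsub) ?_) zero_le
  refine le_trans (measure_iUnion_le _) ?_
  have h0 : ∀ m : Fin M, (Measure.pi fun _ : Fin (M + 1) => expMeasure 1)
      {ω : Fin (M + 1) → ℝ | ω m.succ < 0} = 0 := fun m => pi_coord_neg_null M m.succ
  simp [h0]

lemma measure_eq_of_inter_eq {X : Type*} [MeasurableSpace X] {μ : Measure X}
    {N : Set X} (hN : μ Nᶜ = 0) {E E' : Set X} (h : E ∩ N = E' ∩ N) : μ E = μ E' := by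
  have key : ∀ S : Set X, μ S = μ (S ∩ N) := by
    intro S
    refine le_antisymm ?_ (measure_mono Set.inter_subset_left)
    calc μ S ≤ μ ((S ∩ N) ∪ Nᶜ) := measure_mono (by
          intro x hx
          by_cases hxN : x ∈ N
          · exact Or.inl ⟨hx, hxN⟩
          · exact Or.inr hxN)
      _ ≤ μ (S ∩ N) + μ Nᶜ := measure_union_le _ _
      _ = μ (S ∩ N) := by rw [hN, add_zero]
  rw [key E, key E', h]

/-! ### Pointwise analysis of the outage event -/

lemma tau_lt_iff {α0 b g : ℝ} (hα0 : 0 < α0) (hb : 0 < b) :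
    tau α0 g < b ↔ g < (b + 1) * α0 := by
  rw [tau, max_lt_iff, sub_lt_iff_lt_add, div_lt_iff₀ hα0]
  constructor
  · rintro ⟨-, h⟩; nlinarith
  · intro h; exact ⟨hb, by nlinarith⟩

lemma rate_lt_iff {P α0 Rs g h : ℝ} (hP : 0 < P) (hα0 : 0 < α0) (hRs : 0 < Rs) (hh : 0 ≤ h) :
    rateFSIC P α0 h g < Rs ↔
      (g < ((2 : ℝ) ^ Rs - 1 + 1) * α0 ∨
        (P * h ≤ tau α0 g ∧ P * h < (2 : ℝ) ^ Rs - 1)) := by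
  have h2Rs : (1 : ℝ) < 2 ^ Rs := by
    have := (Real.rpow_lt_rpow_left_iff (x := 2) (y := 0) (z := Rs) one_lt_two).mpr hRs
    rwa [Real.rpow_zero] at this
  have hb0 : (0 : ℝ) < 2 ^ Rs - 1 := by linarith
  have hτ : 0 ≤ tau α0 g := le_max_left _ _
  have hlogb : ∀ x : ℝ, 0 ≤ x → (Real.logb 2 (1 + x) < Rs ↔ x < (2 : ℝ) ^ Rs - 1) := by
    intro x hx
    rw [Real.logb_lt_iff_lt_rpow one_lt_two (by linarith)]
    constructor <;> intro <;> linarith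
  rw [rateFSIC]
  by_cases hc : P * h ≤ tau α0 g
  · rw [if_pos hc, hlogb _ (by positivity)]
    constructor
    · intro h1; exact Or.inr ⟨hc, h1⟩
    · rintro (h1 | ⟨-, h2⟩)
      · exact lt_of_le_of_lt hc ((tau_lt_iff hα0 hb0).mpr h1)
      · exact h2
  · rw [if_neg hc, hlogb _ hτ, tau_lt_iff hα0 hb0]
    constructor
    · exact Or.inl
    · rintro (h1 | ⟨h2, -⟩)
      · exact h1
      · exact absurd h2 hc

/-! ### The outage probability formula -/

lemma outage_formula (M : ℕ) (hM : 1 ≤ M) {R0 Rs P : ℝ} (hR0 : 0 < R0) (hRs : 0 < Rs)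
    (hP : 0 < P) :
    outageFSIC M R0 Rs P =
      (1 - Real.exp (-((2 ^ R0 - 1) * 2 ^ Rs / P))) +
        Real.exp (-((2 ^ R0 - 1) * 2 ^ Rs / P)) *
          (1 - Real.exp (-((2 ^ Rs - 1) / P))) ^ M := by
  classical
  haveI : IsProbabilityMeasure (expMeasure 1) := isProbabilityMeasure_expMeasure one_pos
  haveI hne : Nonempty (Fin M) := ⟨⟨0, hM⟩⟩
  have h2R0 : (1 : ℝ) < 2 ^ R0 := by
    have := (Real.rpow_lt_rpow_left_iff (x := 2) (y := 0) (z := R0) one_lt_two).mpr hR0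
    rwa [Real.rpow_zero] at this
  have h2Rs : (1 : ℝ) < 2 ^ Rs := by
    have := (Real.rpow_lt_rpow_left_iff (x := 2) (y := 0) (z := Rs) one_lt_two).mpr hRs
    rwa [Real.rpow_zero] at this
  have hε0 : (0 : ℝ) < 2 ^ R0 - 1 := by linarith
  have hb0 : (0 : ℝ) < 2 ^ Rs - 1 := by linarith
  have hα0 : (0 : ℝ) < (2 ^ R0 - 1) / P := div_pos hε0 hP
  have hkey : ((2 : ℝ) ^ Rs - 1 + 1) * ((2 ^ R0 - 1) / P) = (2 ^ R0 - 1) * 2 ^ Rs / P := by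
    field_simp; ring
  have haP : (0 : ℝ) ≤ (2 ^ R0 - 1) * 2 ^ Rs / P := by positivity
  have hbP : (0 : ℝ) ≤ (2 ^ Rs - 1) / P := by positivity
  -- pointwise description of the outage event on nonnegative secondary gains
  have hev : ∀ ω : Fin (M + 1) → ℝ, (∀ m : Fin M, 0 ≤ ω m.succ) →
      ((⨆ m : Fin M, rateFSIC P ((2 ^ R0 - 1) / P) (ω m.succ) (ω 0)) < Rs ↔
        (ω 0 < (2 ^ R0 - 1) * 2 ^ Rs / P ∨ ∀ m : Fin M, ω m.succ < (2 ^ Rs - 1) / P)) := by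
    intro ω hω
    have hsup : (⨆ m : Fin M, rateFSIC P ((2 ^ R0 - 1) / P) (ω m.succ) (ω 0)) < Rs ↔
        ∀ m : Fin M, rateFSIC P ((2 ^ R0 - 1) / P) (ω m.succ) (ω 0) < Rs := by
      constructor
      · intro h m
        exact lt_of_le_of_lt (le_ciSup (f := fun m : Fin M =>
          rateFSIC P ((2 ^ R0 - 1) / P) (ω m.succ) (ω 0))
          (Set.finite_range _).bddAbove m) h
      · intro h
        obtain ⟨m0, hm0⟩ :=
          Finite.exists_max fun m : Fin M => rateFSIC P ((2 ^ R0 - 1) / P) (ω m.succ) (ω 0)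
        exact lt_of_le_of_lt (ciSup_le hm0) (h m0)
    rw [hsup]
    constructor
    · intro h
      by_cases hg : ω 0 < (2 ^ R0 - 1) * 2 ^ Rs / P
      · exact Or.inl hg
      · right; intro m
        rcases (rate_lt_iff hP hα0 hRs (hω m)).mp (h m) with h1 | ⟨-, h2⟩
        · rw [hkey] at h1; exact absurd h1 hg
        · exact (lt_div_iff₀' hP).mpr h2
    · rintro (hg | hT) m
      · exact (rate_lt_iff hP hα0 hRs (hω m)).mpr (Or.inl (by rw [hkey]; exact hg))
      · apply (rate_lt_iff hP hα0 hRs (hω m)).mpr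
        by_cases hg : ω 0 < (2 ^ R0 - 1) * 2 ^ Rs / P
        · exact Or.inl (by rw [hkey]; exact hg)
        · right
          have hτb : (2 : ℝ) ^ Rs - 1 ≤ tau ((2 ^ R0 - 1) / P) (ω 0) := by
            by_contra hc
            push_neg at hc
            exact hg (by rw [← hkey]; exact (tau_lt_iff hα0 hb0).mp hc)
          have h2 : P * ω m.succ < (2 : ℝ) ^ Rs - 1 := (lt_div_iff₀' hP).mp (hT m)
          exact ⟨le_of_lt (lt_of_lt_of_le h2 hτb), h2⟩
  -- rewrite the event up to a null set
  simp only [outageFSIC]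
  have hEset : {ω : Fin (M + 1) → ℝ |
        (⨆ m : Fin M, rateFSIC P ((2 ^ R0 - 1) / P) (ω m.succ) (ω 0)) < Rs} ∩
        {ω : Fin (M + 1) → ℝ | ∀ m : Fin M, 0 ≤ ω m.succ} =
      ({ω : Fin (M + 1) → ℝ | ω 0 ∈ Set.Iio ((2 ^ R0 - 1) * 2 ^ Rs / P) ∧
          ∀ m : Fin M, ω m.succ ∈ (Set.univ : Set ℝ)} ∪
        {ω : Fin (M + 1) → ℝ | ω 0 ∈ Set.Ici ((2 ^ R0 - 1) * 2 ^ Rs / P) ∧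
          ∀ m : Fin M, ω m.succ ∈ Set.Iio ((2 ^ Rs - 1) / P)}) ∩
        {ω : Fin (M + 1) → ℝ | ∀ m : Fin M, 0 ≤ ω m.succ} := by
    ext ω
    simp only [Set.mem_inter_iff, Set.mem_setOf_eq, Set.mem_union, Set.mem_Iio, Set.mem_Ici,
      Set.mem_univ, and_true]
    constructor
    · rintro ⟨h1, h2⟩
      refine ⟨?_, h2⟩
      rcases (hev ω h2).mp h1 with hg | hT
      · exact Or.inl ⟨hg, fun _ => trivial⟩
      · rcases lt_or_ge (ω 0) ((2 ^ R0 - 1) * 2 ^ Rs / P) with hg | hg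
        · exact Or.inl ⟨hg, fun _ => trivial⟩
        · exact Or.inr ⟨hg, hT⟩
    · rintro ⟨h1, h2⟩
      refine ⟨(hev ω h2).mpr ?_, h2⟩
      rcases h1 with ⟨hg, -⟩ | ⟨-, hT⟩
      · exact Or.inl hg
      · exact Or.inr hT
  rw [measure_eq_of_inter_eq (pi_neg_null M) hEset]
  -- measure of the disjoint union
  have hdisj : Disjoint
      {ω : Fin (M + 1) → ℝ | ω 0 ∈ Set.Iio ((2 ^ R0 - 1) * 2 ^ Rs / P) ∧
        ∀ m : Fin M, ω m.succ ∈ (Set.univ : Set ℝ)}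
      {ω : Fin (M + 1) → ℝ | ω 0 ∈ Set.Ici ((2 ^ R0 - 1) * 2 ^ Rs / P) ∧
        ∀ m : Fin M, ω m.succ ∈ Set.Iio ((2 ^ Rs - 1) / P)} := by
    rw [Set.disjoint_left]
    rintro ω ⟨h1, -⟩ ⟨h2, -⟩
    exact absurd (Set.mem_Ici.mp h2) (not_le.mpr (Set.mem_Iio.mp h1))
  have hmeas : MeasurableSet
      {ω : Fin (M + 1) → ℝ | ω 0 ∈ Set.Ici ((2 ^ R0 - 1) * 2 ^ Rs / P) ∧
        ∀ m : Fin M, ω m.succ ∈ Set.Iio ((2 ^ Rs - 1) / P)} := by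
    have : {ω : Fin (M + 1) → ℝ | ω 0 ∈ Set.Ici ((2 ^ R0 - 1) * 2 ^ Rs / P) ∧
          ∀ m : Fin M, ω m.succ ∈ Set.Iio ((2 ^ Rs - 1) / P)} =
        (Function.eval 0 ⁻¹' Set.Ici ((2 ^ R0 - 1) * 2 ^ Rs / P)) ∩
          ⋂ m : Fin M, Function.eval m.succ ⁻¹' Set.Iio ((2 ^ Rs - 1) / P) := by
      ext ω; simp [Set.mem_iInter]
    rw [this]
    exact (((measurable_pi_apply 0) measurableSet_Ici).inter
      (MeasurableSet.iInter fun m => (measurable_pi_apply _) measurableSet_Iio))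
  rw [measure_union hdisj hmeas, pi_cases_measure, pi_cases_measure,
    expM_Iio, expM_Iio, expM_Ici haP, if_pos haP, if_pos hbP]
  simp only [measure_univ, one_pow, mul_one]
  rw [ENNReal.toReal_add (by exact ENNReal.ofReal_ne_top)
      (ENNReal.mul_ne_top ENNReal.ofReal_ne_top (ENNReal.pow_ne_top ENNReal.ofReal_ne_top)),
    ENNReal.toReal_mul, ENNReal.toReal_pow,
    ENNReal.toReal_ofReal (one_sub_exp_neg_nonneg haP),
    ENNReal.toReal_ofReal (Real.exp_pos _).le,
    ENNReal.toReal_ofReal (one_sub_exp_neg_nonneg hbP)]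

/-! ### Main theorem -/

/-- Remark 4: the diversity gain of the FSIC-PA scheme is `1`:
the outage probability is positive for every `P > 0` and
`log P̂out(P) / log P → −1` as `P → ∞`. -/
theorem fsic_pa_diversity_gain
    (M : ℕ) (hM : 1 ≤ M) (R0 Rs : ℝ) (hR0 : 0 < R0) (hRs : 0 < Rs) :
    (∀ P > (0 : ℝ), 0 < outageFSIC M R0 Rs P) ∧
    Tendsto (fun P : ℝ => Real.log (outageFSIC M R0 Rs P) / Real.log P)
      atTop (nhds (-1 : ℝ)) := by
  have h2R0 : (1 : ℝ) < 2 ^ R0 := by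
    have := (Real.rpow_lt_rpow_left_iff (x := 2) (y := 0) (z := R0) one_lt_two).mpr hR0
    rwa [Real.rpow_zero] at this
  have h2Rs : (1 : ℝ) < 2 ^ Rs := by
    have := (Real.rpow_lt_rpow_left_iff (x := 2) (y := 0) (z := Rs) one_lt_two).mpr hRs
    rwa [Real.rpow_zero] at this
  have ha0 : (0 : ℝ) < (2 ^ R0 - 1) * 2 ^ Rs := by nlinarith
  have hb0 : (0 : ℝ) < 2 ^ Rs - 1 := by linarith
  set a : ℝ := (2 ^ R0 - 1) * 2 ^ Rs with ha_def
  set b : ℝ := 2 ^ Rs - 1 with hb_def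
  have hpos : ∀ P > (0 : ℝ), 0 < outageFSIC M R0 Rs P := by
    intro P hP
    rw [outage_formula M hM hR0 hRs hP]
    apply add_pos_of_pos_of_nonneg
    · have := exp_neg_lt_one (x := a / P) (by positivity)
      linarith
    · exact mul_nonneg (Real.exp_pos _).le
        (pow_nonneg (one_sub_exp_neg_nonneg (by positivity)) M)
  refine ⟨hpos, ?_⟩
  -- limits of the bounding functions
  have hdiv0 : ∀ c : ℝ, Tendsto (fun P : ℝ => c / P) atTop (nhds 0) := by
    intro c
    have := tendsto_inv_atTop_zero (𝕜 := ℝ) |>.const_mul c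
    rw [mul_zero] at this
    exact this.congr fun P => (div_eq_mul_inv c P).symm
  have glo : Tendsto (fun P : ℝ => (Real.log a - Real.log P - a / P) / Real.log P)
      atTop (nhds (-1)) := by
    have t1 : Tendsto (fun P : ℝ => (Real.log a - a / P) / Real.log P) atTop (nhds 0) :=
      Tendsto.div_atTop (tendsto_const_nhds.sub (hdiv0 a) |>.congr' (by
        filter_upwards with P; rfl) |>.mono_right (by rw [sub_zero])) Real.tendsto_log_atTop
    have t2 : Tendsto (fun P : ℝ => (Real.log a - a / P) / Real.log P - 1) atTop
        (nhds (0 - 1)) := t1.sub tendsto_const_nhds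
    rw [zero_sub] at t2
    apply t2.congr'
    filter_upwards [eventually_gt_atTop (1 : ℝ)] with P hP1
    have hlogP : Real.log P ≠ 0 := ne_of_gt (Real.log_pos hP1)
    field_simp
    ring
  have ghi : Tendsto (fun P : ℝ => (Real.log (a + b) - Real.log P) / Real.log P)
      atTop (nhds (-1)) := by
    have t1 : Tendsto (fun P : ℝ => Real.log (a + b) / Real.log P) atTop (nhds 0) :=
      Tendsto.div_atTop tendsto_const_nhds Real.tendsto_log_atTop
    have t2 : Tendsto (fun P : ℝ => Real.log (a + b) / Real.log P - 1) atTop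
        (nhds (0 - 1)) := t1.sub tendsto_const_nhds
    rw [zero_sub] at t2
    apply t2.congr'
    filter_upwards [eventually_gt_atTop (1 : ℝ)] with P hP1
    have hlogP : Real.log P ≠ 0 := ne_of_gt (Real.log_pos hP1)
    field_simp
  apply tendsto_of_tendsto_of_tendsto_of_le_of_le' glo ghi
  · -- lower bound
    filter_upwards [eventually_gt_atTop (1 : ℝ)] with P hP1
    have hP0 : (0 : ℝ) < P := lt_trans one_pos hP1
    have hlogP : 0 < Real.log P := Real.log_pos hP1
    rw [outage_formula M hM hR0 hRs hP0, ← ha_def, ← hb_def]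
    apply (div_le_div_iff_of_pos_right hlogP).mpr
    have hx : (0 : ℝ) < a / P := by positivity
    have h1 : (a / P) * Real.exp (-(a / P)) ≤
        (1 - Real.exp (-(a / P))) + Real.exp (-(a / P)) * (1 - Real.exp (-(b / P))) ^ M := by
      have h2 : 0 ≤ Real.exp (-(a / P)) * (1 - Real.exp (-(b / P))) ^ M :=
        mul_nonneg (Real.exp_pos _).le
          (pow_nonneg (one_sub_exp_neg_nonneg (by positivity)) M)
      have h3 := mul_exp_neg_le_one_sub (a / P)
      linarith
    calc Real.log a - Real.log P - a / P
        = Real.log ((a / P) * Real.exp (-(a / P))) := by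
          rw [Real.log_mul (ne_of_gt hx) (Real.exp_ne_zero _), Real.log_exp,
            Real.log_div (ne_of_gt ha0) (ne_of_gt hP0)]
          ring
      _ ≤ _ := Real.log_le_log (by positivity) h1
  · -- upper bound
    filter_upwards [eventually_gt_atTop (1 : ℝ), eventually_ge_atTop b] with P hP1 hPb
    have hP0 : (0 : ℝ) < P := lt_trans one_pos hP1
    have hlogP : 0 < Real.log P := Real.log_pos hP1
    have hL0 : 0 < outageFSIC M R0 Rs P := hpos P hP0
    rw [outage_formula M hM hR0 hRs hP0, ← ha_def, ← hb_def] at hL0 ⊢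
    apply (div_le_div_iff_of_pos_right hlogP).mpr
    have hub : (1 - Real.exp (-(a / P))) + Real.exp (-(a / P)) *
        (1 - Real.exp (-(b / P))) ^ M ≤ (a + b) / P := by
      have h1 : 1 - Real.exp (-(a / P)) ≤ a / P := one_sub_exp_neg_le _
      have h2 : Real.exp (-(a / P)) ≤ 1 := exp_neg_le_one (by positivity)
      have h3 : (1 - Real.exp (-(b / P))) ^ M ≤ b / P := by
        calc (1 - Real.exp (-(b / P))) ^ M ≤ (b / P) ^ M :=
              pow_le_pow_left₀ (one_sub_exp_neg_nonneg (by positivity))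
                (one_sub_exp_neg_le _) M
          _ ≤ b / P := pow_le_of_le_one (by positivity)
              ((div_le_one hP0).mpr hPb) (Nat.one_le_iff_ne_zero.mp hM)
      have h4 : Real.exp (-(a / P)) * (1 - Real.exp (-(b / P))) ^ M ≤ 1 * (b / P) :=
        mul_le_mul h2 h3 (pow_nonneg (one_sub_exp_neg_nonneg (by positivity)) M) one_pos.le
      rw [one_mul] at h4
      rw [add_div]
      linarith
    calc Real.log ((1 - Real.exp (-(a / P))) + Real.exp (-(a / P)) *
          (1 - Real.exp (-(b / P))) ^ M)
        ≤ Real.log ((a + b) / P) := Real.log_le_log hL0 hub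
      _ = Real.log (a + b) - Real.log P :=
          Real.log_div (by positivity) (ne_of_gt hP0)
end
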